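/- Let R be a commutative ring, Φ : L₁ → L₀ a surjective homomorphism of Lie algebras over R, H₀ a Lie subalgebra of L₀, and H₁ = Φ⁻¹(H₀). Then the induced R-linear isomorphism Φ̄ : L₁⧸H₁ → L₀⧸H₀ (sending the coset of x to the coset of Φ(x)) restricts to a bijection Γ₀(L₁, H₁) → Γ₀(L₀, H₀), and this bijection is an isomorphism of Lie algebras for the brackets on flat elements determined by ⁅π(y), π(y')⁆ = π(⁅y, y'⁆) for representatives y, y' in the respective normalizers. In particular, the pullback map Φ̄* : Γ₀(L₀, H₀) → Γ₀(L₁, H₁), defined as the inverse of this restriction, is an injective morphism of Lie algebras. -/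
import Mathlib


/-- Let `R` be a commutative ring, `Φ : L₁ → L₀` a surjective homomorphism
of Lie algebras over `R`, `H₀` a Lie subalgebra of `L₀` and `H₁ = Φ⁻¹(H₀)`.  The induced
`R`-linear isomorphism `Φ̄ : L₁⧸H₁ → L₀⧸H₀` (sending the coset of `x` to the coset of `Φ x`)
restricts to a bijection `Γ₀(L₁, H₁) → Γ₀(L₀, H₀)` between the flat elements, and this
bijection is an isomorphism of Lie algebras for the brackets determined by
`⁅π y, π y'⁆ = π ⁅y, y'⁆` on representatives in the respective normalizers.  In particular
the pullback map `Φ̄* : Γ₀(L₀, H₀) → Γ₀(L₁, H₁)` (the inverse of this restriction) is an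
injective morphism of Lie algebras. -/
theorem stmt5 (R : Type*) [CommRing R]
    (L₁ : Type*) [LieRing L₁] [LieAlgebra R L₁]
    (L₀ : Type*) [LieRing L₀] [LieAlgebra R L₀]
    (Φ : L₁ →ₗ⁅R⁆ L₀) (hΦ : Function.Surjective Φ)
    (H₀ : LieSubalgebra R L₀) (H₁ : LieSubalgebra R L₁)
    (hH₁ : (H₁ : Set L₁) = Φ ⁻¹' (H₀ : Set L₀)) :
    ∃ e : (L₁ ⧸ H₁.toSubmodule) ≃ₗ[R] (L₀ ⧸ H₀.toSubmodule),
      (∀ x : L₁, e (Submodule.Quotient.mk x) = Submodule.Quotient.mk (Φ x)) ∧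
      Set.BijOn e
        {yb : L₁ ⧸ H₁.toSubmodule |
          ∃ y : L₁, Submodule.Quotient.mk y = yb ∧ ∀ x ∈ H₁, ⁅x, y⁆ ∈ H₁}
        {yb : L₀ ⧸ H₀.toSubmodule |
          ∃ y : L₀, Submodule.Quotient.mk y = yb ∧ ∀ x ∈ H₀, ⁅x, y⁆ ∈ H₀} ∧
      (∀ y y' : L₁, (∀ h ∈ H₁, ⁅y, h⁆ ∈ H₁) → (∀ h ∈ H₁, ⁅y', h⁆ ∈ H₁) →
        e (Submodule.Quotient.mk ⁅y, y'⁆) = Submodule.Quotient.mk ⁅Φ y, Φ y'⁆) := by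
  have hmem : ∀ x : L₁, x ∈ H₁ ↔ Φ x ∈ H₀ := by
    intro x
    constructor
    · intro hx
      have : x ∈ (Φ ⁻¹' (H₀ : Set L₀)) := by rw [← hH₁]; exact hx
      exact this
    · intro hx
      have : x ∈ (Φ ⁻¹' (H₀ : Set L₀)) := hx
      rw [← hH₁] at this; exact this
  have hle : H₁.toSubmodule ≤ H₀.toSubmodule.comap Φ.toLinearMap := by
    intro x hx
    exact (hmem x).mp hx
  let f : (L₁ ⧸ H₁.toSubmodule) →ₗ[R] (L₀ ⧸ H₀.toSubmodule) :=
    Submodule.mapQ H₁.toSubmodule H₀.toSubmodule Φ.toLinearMap hle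
  have hf : ∀ x : L₁, f (Submodule.Quotient.mk x) = Submodule.Quotient.mk (Φ x) := by
    intro x; rfl
  have hbij : Function.Bijective f := by
    constructor
    · rw [← LinearMap.ker_eq_bot, Submodule.eq_bot_iff]
      intro q hq
      obtain ⟨x, rfl⟩ := Submodule.Quotient.mk_surjective _ q
      have : Submodule.Quotient.mk (Φ x) = (0 : L₀ ⧸ H₀.toSubmodule) := hq
      rw [Submodule.Quotient.mk_eq_zero] at this
      rw [Submodule.Quotient.mk_eq_zero]
      exact (hmem x).mpr this
    · intro q
      obtain ⟨y, rfl⟩ := Submodule.Quotient.mk_surjective _ q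
      obtain ⟨x, rfl⟩ := hΦ y
      exact ⟨Submodule.Quotient.mk x, rfl⟩
  let e := LinearEquiv.ofBijective f hbij
  have he : ∀ x : L₁, e (Submodule.Quotient.mk x) = Submodule.Quotient.mk (Φ x) := hf
  refine ⟨e, he, ?_, ?_⟩
  · refine ⟨?_, ?_, ?_⟩
    · rintro yb ⟨y, rfl, hy⟩
      refine ⟨Φ y, (he y).symm, ?_⟩
      intro x₀ hx₀
      obtain ⟨x, rfl⟩ := hΦ x₀
      have hx : x ∈ H₁ := (hmem x).mpr hx₀
      have := hy x hx
      have : Φ ⁅x, y⁆ ∈ H₀ := (hmem _).mp this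
      simpa using this
    · exact fun a _ b _ hab => hbij.1 hab
    · rintro yb ⟨y₀, rfl, hy₀⟩
      obtain ⟨y, rfl⟩ := hΦ y₀
      refine ⟨Submodule.Quotient.mk y, ⟨y, rfl, ?_⟩, he y⟩
      intro x hx
      have : ⁅Φ x, Φ y⁆ ∈ H₀ := hy₀ (Φ x) ((hmem x).mp hx)
      refine (hmem _).mpr ?_
      simpa using this
  · intro y y' _ _
    rw [he]
    simp
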